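/- If f ∈ z·ℚ_p[[z]] satisfies f(z^p) - p·f(z) ∈ p·z·ℤ_p[[z]], then z·exp(f(z)) ∈ z·ℤ_p[[z]], i.e., exp(f) has p-integral coefficients. -/

import Mathlib

open PowerSeries Finset

namespace DworkAux

lemma sum_triangle {M : Type*} [AddCommMonoid M] (n : ℕ) (G : ℕ → ℕ → M)
    (hG : ∀ k l, n < k + l → G k l = 0) :
    ∑ m ∈ range (n + 1), ∑ k ∈ range (m + 1), G k (m - k)
      = ∑ k ∈ range (n + 1), ∑ l ∈ range (n + 1), G k l := by
  have hR : ∑ k ∈ range (n + 1), ∑ l ∈ range (n + 1), G k l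
      = ∑ kl ∈ ((range (n + 1)) ×ˢ (range (n + 1))).filter (fun kl => kl.1 + kl.2 ≤ n),
          G kl.1 kl.2 := by
    rw [← Finset.sum_product']
    symm
    apply Finset.sum_subset (Finset.filter_subset _ _)
    intro kl hmem hkl
    simp only [Finset.mem_filter, not_and, not_le] at hkl
    exact hG _ _ (hkl hmem)
  rw [hR, Finset.sum_sigma']
  apply Finset.sum_nbij' (fun x => (x.2, x.1 - x.2)) (fun kl => ⟨kl.1 + kl.2, kl.1⟩)
  · rintro ⟨m, k⟩ hmk
    simp only [Finset.mem_sigma, Finset.mem_range] at hmk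
    simp only [Finset.mem_filter, Finset.mem_product, Finset.mem_range]
    omega
  · rintro ⟨k, l⟩ hkl
    simp only [Finset.mem_filter, Finset.mem_product, Finset.mem_range] at hkl
    simp only [Finset.mem_sigma, Finset.mem_range]
    omega
  · rintro ⟨m, k⟩ hmk
    simp only [Finset.mem_sigma, Finset.mem_range] at hmk
    exact Sigma.ext (by dsimp only; omega) HEq.rfl
  · rintro ⟨k, l⟩ hkl
    simp
  · rintro ⟨m, k⟩ hmk
    rfl

variable {p : ℕ} [Fact p.Prime]

/-- Formal exponential of a power series with zero constant term, defined coefficientwise. -/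
noncomputable def expS (f : PowerSeries ℚ_[p]) : PowerSeries ℚ_[p] :=
  PowerSeries.mk fun n => ∑ k ∈ Finset.range (n + 1),
    ((k.factorial : ℚ_[p]))⁻¹ * PowerSeries.coeff n (f ^ k)

theorem coeff_pow_eq_zero {f : PowerSeries ℚ_[p]} (hf : constantCoeff f = 0)
    {n k : ℕ} (h : n < k) : coeff n (f ^ k) = 0 := by
  have hX : (X : PowerSeries ℚ_[p]) ^ k ∣ f ^ k :=
    pow_dvd_pow_of_dvd (X_dvd_iff.2 hf) k
  exact (X_pow_dvd_iff.1 hX) n h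

theorem coeff_expS {f : PowerSeries ℚ_[p]} (hf : constantCoeff f = 0)
    {n N : ℕ} (h : n ≤ N) :
    coeff n (expS f) = ∑ k ∈ Finset.range (N + 1),
      ((k.factorial : ℚ_[p]))⁻¹ * coeff n (f ^ k) := by
  rw [expS, coeff_mk]
  apply Finset.sum_subset (Finset.range_subset_range.2 (by omega))
  intro k hk hk'
  simp only [Finset.mem_range, not_lt] at hk'
  rw [coeff_pow_eq_zero hf (by omega), mul_zero]

theorem coeff_zero_expS (f : PowerSeries ℚ_[p]) : coeff 0 (expS f) = 1 := by
  simp [expS, coeff_mk]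


theorem expS_add {f g : PowerSeries ℚ_[p]} (hf : constantCoeff f = 0)
    (hg : constantCoeff g = 0) : expS (f + g) = expS f * expS g := by
  ext n
  set G : ℕ → ℕ → ℚ_[p] := fun k l =>
    ((k.factorial : ℚ_[p]))⁻¹ * ((l.factorial : ℚ_[p]))⁻¹ * coeff n (f ^ k * g ^ l)
    with hGdef
  have hGzero : ∀ k l : ℕ, n < k + l → G k l = 0 := by
    intro k l h
    have hc : coeff n (f ^ k * g ^ l) = 0 := by
      rw [coeff_mul]
      apply Finset.sum_eq_zero
      rintro ⟨i, j⟩ hij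
      rw [Finset.HasAntidiagonal.mem_antidiagonal] at hij
      rcases lt_or_ge i k with hik | hik
      · rw [coeff_pow_eq_zero hf hik, zero_mul]
      · rw [coeff_pow_eq_zero hg (by omega), mul_zero]
    simp [hGdef, hc]
  have hR : coeff n (expS f * expS g)
      = ∑ k ∈ range (n + 1), ∑ l ∈ range (n + 1), G k l := by
    rw [coeff_mul]
    have step : ∀ ij ∈ Finset.HasAntidiagonal.antidiagonal n,
        coeff ij.1 (expS f) * coeff ij.2 (expS g)
        = ∑ k ∈ range (n + 1), ∑ l ∈ range (n + 1),
            ((k.factorial : ℚ_[p]))⁻¹ * ((l.factorial : ℚ_[p]))⁻¹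
              * (coeff ij.1 (f ^ k) * coeff ij.2 (g ^ l)) := by
      rintro ⟨i, j⟩ hij
      rw [Finset.HasAntidiagonal.mem_antidiagonal] at hij
      rw [coeff_expS hf (show i ≤ n by omega), coeff_expS hg (show j ≤ n by omega),
        Finset.sum_mul_sum]
      apply Finset.sum_congr rfl; intro k _
      apply Finset.sum_congr rfl; intro l _
      ring
    rw [Finset.sum_congr rfl step, Finset.sum_comm]
    apply Finset.sum_congr rfl; intro k _
    rw [Finset.sum_comm]
    apply Finset.sum_congr rfl; intro l _
    rw [hGdef]
    simp only
    rw [coeff_mul, Finset.mul_sum]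
  have hL : coeff n (expS (f + g))
      = ∑ m ∈ range (n + 1), ∑ k ∈ range (m + 1), G k (m - k) := by
    rw [coeff_expS (by simp [map_add, hf, hg]) (le_refl n)]
    apply Finset.sum_congr rfl; intro m _
    rw [add_pow, map_sum, Finset.mul_sum]
    apply Finset.sum_congr rfl; intro k hk
    rw [Finset.mem_range] at hk
    have hfact : ((m.factorial : ℚ_[p]))⁻¹ * (m.choose k : ℚ_[p])
        = ((k.factorial : ℚ_[p]))⁻¹ * (((m - k).factorial : ℚ_[p]))⁻¹ := by
      have h1 : (k.factorial : ℚ_[p]) * ((m - k).factorial : ℚ_[p]) * (m.choose k : ℚ_[p])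
          = (m.factorial : ℚ_[p]) := by
        rw [← Nat.cast_mul, ← Nat.cast_mul, ← Nat.choose_mul_factorial_mul_factorial
          (by omega : k ≤ m)]
        ring_nf
      have hC0 : (m.choose k : ℚ_[p]) ≠ 0 := by
        exact_mod_cast (Nat.choose_pos (by omega : k ≤ m)).ne'
      field_simp
      rw [← h1]
      ring_nf
      rw [mul_inv_cancel₀ hC0, one_mul]
    have hcast : (↑(m.choose k) : PowerSeries ℚ_[p])
        = PowerSeries.C ((m.choose k : ℚ_[p])) :=
      (map_natCast (PowerSeries.C) (m.choose k)).symm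
    rw [hGdef]
    simp only
    rw [hcast, PowerSeries.coeff_mul_C, ← hfact]
    ring
  rw [hL, hR]
  exact sum_triangle n G hGzero

theorem expS_nsmul {f : PowerSeries ℚ_[p]} (hf : constantCoeff f = 0) (k : ℕ) :
    expS (k • f) = expS f ^ k := by
  induction k with
  | zero =>
    simp only [zero_smul, pow_zero]
    ext n
    rcases Nat.eq_zero_or_pos n with rfl | hn
    · simp [expS, coeff_mk]
    · rw [expS, coeff_mk, PowerSeries.coeff_one, if_neg (by omega)]
      apply Finset.sum_eq_zero
      intro k _
      cases k with
      | zero => simp [PowerSeries.coeff_one, hn.ne']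
      | succ k => simp [zero_pow]
  | succ k ih =>
    have h1 : (k + 1) • f = k • f + f := by rw [add_smul, one_smul]
    rw [h1, expS_add (by simp [hf]) hf, ih, pow_succ]

def IsExpand (A A' : PowerSeries ℚ_[p]) : Prop :=
  ∀ n : ℕ, coeff n A' = if p ∣ n then coeff (n / p) A else 0

theorem isExpand_mul {A B A' B' : PowerSeries ℚ_[p]} (hA : IsExpand A A')
    (hB : IsExpand B B') : IsExpand (A * B) (A' * B') := by
  have hp0 : 0 < p := (Fact.out : p.Prime).pos
  intro n
  rw [coeff_mul, coeff_mul]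
  have step : ∀ ij ∈ Finset.HasAntidiagonal.antidiagonal n,
      coeff ij.1 A' * coeff ij.2 B'
      = if p ∣ ij.1 ∧ p ∣ ij.2 then coeff (ij.1 / p) A * coeff (ij.2 / p) B
        else 0 := by
    rintro ⟨i, j⟩ _
    rw [hA i, hB j]
    by_cases hi : p ∣ i <;> by_cases hj : p ∣ j <;> simp [hi, hj]
  rw [Finset.sum_congr rfl step]
  by_cases hn : p ∣ n
  · rw [if_pos hn, ← Finset.sum_filter]
    apply Finset.sum_nbij' (fun ij => (ij.1 / p, ij.2 / p)) (fun ij => (p * ij.1, p * ij.2))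
    · rintro ⟨i, j⟩ hij
      simp only [Finset.mem_filter, Finset.HasAntidiagonal.mem_antidiagonal] at hij
      obtain ⟨hsum, hi, hj⟩ := hij
      obtain ⟨a, rfl⟩ := hi
      obtain ⟨b, rfl⟩ := hj
      obtain ⟨m, rfl⟩ := hn
      simp only [Finset.HasAntidiagonal.mem_antidiagonal]
      rw [Nat.mul_div_cancel_left _ hp0, Nat.mul_div_cancel_left _ hp0,
        Nat.mul_div_cancel_left _ hp0]
      have : p * (a + b) = p * m := by rw [Nat.mul_add]; exact hsum
      exact Nat.eq_of_mul_eq_mul_left hp0 this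
    · rintro ⟨a, b⟩ hab
      simp only [Finset.HasAntidiagonal.mem_antidiagonal] at hab
      obtain ⟨m, rfl⟩ := hn
      simp only [Finset.mem_filter, Finset.HasAntidiagonal.mem_antidiagonal]
      refine ⟨by rw [← Nat.mul_add, hab, Nat.mul_div_cancel_left _ hp0], Dvd.intro _ rfl,
        Dvd.intro _ rfl⟩
    · rintro ⟨i, j⟩ hij
      simp only [Finset.mem_filter, Finset.HasAntidiagonal.mem_antidiagonal] at hij
      obtain ⟨hsum, ⟨a, rfl⟩, ⟨b, rfl⟩⟩ := hij
      simp [Nat.mul_div_cancel_left _ hp0]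
    · rintro ⟨a, b⟩ _
      simp [Nat.mul_div_cancel_left _ hp0]
    · rintro ⟨i, j⟩ _
      rfl
  · rw [if_neg hn]
    apply Finset.sum_eq_zero
    rintro ⟨i, j⟩ hij
    rw [Finset.HasAntidiagonal.mem_antidiagonal] at hij
    have h2 : ¬(p ∣ i ∧ p ∣ j) := fun ⟨h1, h2⟩ => hn (hij ▸ dvd_add h1 h2)
    simp [h2]

theorem isExpand_pow {A A' : PowerSeries ℚ_[p]} (hA : IsExpand A A') (k : ℕ) :
    IsExpand (A ^ k) (A' ^ k) := by
  have hp1 : 1 < p := (Fact.out : p.Prime).one_lt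
  induction k with
  | zero =>
    intro n
    simp only [pow_zero]
    rcases Nat.eq_zero_or_pos n with rfl | hn
    · simp
    · rw [PowerSeries.coeff_one, if_neg (by omega)]
      by_cases h : p ∣ n
      · rw [if_pos h, PowerSeries.coeff_one, if_neg]
        intro h0
        have := Nat.div_pos (Nat.le_of_dvd hn h) (by omega)
        omega
      · rw [if_neg h]
  | succ k ih =>
    rw [pow_succ, pow_succ]
    exact isExpand_mul ih hA

theorem norm_coeff_mul_le {x y : PowerSeries ℚ_[p]} {c d : ℝ} (hc : 0 ≤ c) (hd : 0 ≤ d)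
    (hx : ∀ n, ‖coeff n x‖ ≤ c) (hy : ∀ n, ‖coeff n y‖ ≤ d) (n : ℕ) :
    ‖coeff n (x * y)‖ ≤ c * d := by
  rw [coeff_mul]
  apply IsUltrametricDist.norm_sum_le_of_forall_le_of_nonneg (mul_nonneg hc hd)
  rintro ⟨i, j⟩ _
  rw [norm_mul]
  exact mul_le_mul (hx i) (hy j) (norm_nonneg _) hc

theorem norm_coeff_pow_le {h : PowerSeries ℚ_[p]} {c : ℝ} (hc : 0 ≤ c)
    (hh : ∀ n, ‖coeff n h‖ ≤ c) (k : ℕ) (n : ℕ) :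
    ‖coeff n (h ^ k)‖ ≤ c ^ k := by
  induction k generalizing n with
  | zero =>
    simp only [pow_zero, PowerSeries.coeff_one]
    split_ifs <;> simp
  | succ k ih =>
    rw [pow_succ, pow_succ]
    exact norm_coeff_mul_le (pow_nonneg hc k) hc ih hh n

theorem padicValNat_factorial_le (k : ℕ) (hk : 1 ≤ k) :
    padicValNat p (k.factorial) ≤ k - 1 := by
  have hp1 : 1 < p := (Fact.out : p.Prime).one_lt
  have hleg := sub_one_mul_padicValNat_factorial (p := p) k
  have hdig : 1 ≤ (p.digits k).sum := by
    have hne : p.digits k ≠ [] := Nat.digits_ne_nil_iff_ne_zero.2 (by omega)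
    have hlast := Nat.getLast_digit_ne_zero p (show k ≠ 0 by omega)
    have hmem := List.getLast_mem hne
    have := List.le_sum_of_mem hmem
    omega
  have h1 : padicValNat p k.factorial ≤ (p - 1) * padicValNat p k.factorial :=
    Nat.le_mul_of_pos_left _ (by omega)
  omega

theorem norm_factorial_inv_mul_le {k n : ℕ} (hk : 1 ≤ k) {h : PowerSeries ℚ_[p]}
    (hh : ∀ m, ‖coeff m h‖ ≤ ‖(p : ℚ_[p])‖) :
    ‖((k.factorial : ℚ_[p]))⁻¹ * coeff n (h ^ k)‖ ≤ ‖(p : ℚ_[p])‖ := by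
  have hp1 : 1 < p := (Fact.out : p.Prime).one_lt
  have hppos : (0:ℝ) < p := by positivity
  have hfne : (k.factorial : ℚ_[p]) ≠ 0 := by exact_mod_cast k.factorial_ne_zero
  have hnorm : ‖(k.factorial : ℚ_[p])‖ = (p : ℝ) ^ (-(padicValNat p k.factorial : ℤ)) := by
    rw [Padic.norm_eq_zpow_neg_valuation (by exact_mod_cast k.factorial_ne_zero),
      Padic.valuation_natCast]
  have hbound := norm_coeff_pow_le (norm_nonneg _) hh k n
  rw [norm_mul, norm_inv, hnorm]
  have hnp : ‖(p : ℚ_[p])‖ = (p:ℝ)^(-1 : ℤ) := by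
    rw [Padic.norm_p, zpow_neg_one]
  calc ((p:ℝ) ^ (-(padicValNat p k.factorial : ℤ)))⁻¹ * ‖coeff n (h ^ k)‖
      ≤ (p:ℝ) ^ ((padicValNat p k.factorial : ℤ)) * ((p:ℝ)^(-1:ℤ))^k := by
        rw [← zpow_neg, neg_neg]
        apply mul_le_mul_of_nonneg_left _ (by positivity)
        rw [← hnp]; exact hbound
    _ = (p:ℝ) ^ ((padicValNat p k.factorial : ℤ) - k) := by
        rw [← zpow_natCast ((p:ℝ)^(-1:ℤ)) k, ← zpow_mul, ← zpow_add₀ (by positivity)]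
        ring_nf
    _ ≤ (p:ℝ) ^ (-1 : ℤ) := by
        apply zpow_le_zpow_right₀ (by exact_mod_cast hp1.le)
        have := padicValNat_factorial_le (p := p) k hk
        omega
    _ = ‖(p : ℚ_[p])‖ := hnp.symm

theorem main (f : PowerSeries ℚ_[p]) (hf0 : PowerSeries.constantCoeff f = 0)
    (fp : PowerSeries ℚ_[p])
    (hfp : ∀ n : ℕ, PowerSeries.coeff n fp =
      if p ∣ n then PowerSeries.coeff (n / p) f else 0)
    (hcong : PowerSeries.constantCoeff (fp - (p : ℚ_[p]) • f) = 0 ∧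
      ∀ n : ℕ, ‖PowerSeries.coeff n (fp - (p : ℚ_[p]) • f)‖ ≤ ‖(p : ℚ_[p])‖) :
    ∀ n : ℕ, ‖PowerSeries.coeff n (expS f)‖ ≤ 1 := by
  have hp1 : 1 < p := (Fact.out : p.Prime).one_lt
  have hppos : (0:ℝ) < ‖(p:ℚ_[p])‖ := by
    rw [Padic.norm_p]; positivity
  set h : PowerSeries ℚ_[p] := fp - (p : ℚ_[p]) • f with hh
  have hh0 : constantCoeff h = 0 := hcong.1
  have hhb : ∀ n, ‖coeff n h‖ ≤ ‖(p:ℚ_[p])‖ := hcong.2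
  set H : PowerSeries ℚ_[p] := expS h with hHdef
  have hH0 : coeff 0 H = 1 := coeff_zero_expS h
  have hHb : ∀ j, 1 ≤ j → ‖coeff j H‖ ≤ ‖(p:ℚ_[p])‖ := by
    intro j hj
    rw [hHdef, expS, coeff_mk]
    apply IsUltrametricDist.norm_sum_le_of_forall_le_of_nonneg hppos.le
    intro k _
    rcases Nat.eq_zero_or_pos k with rfl | hk
    · simp only [pow_zero, Nat.factorial_zero, Nat.cast_one, inv_one, one_mul,
        PowerSeries.coeff_one, if_neg (by omega : ¬ j = 0), norm_zero]
      exact hppos.le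
    · exact norm_factorial_inv_mul_le hk hhb
  -- functional equation
  have hfp0 : constantCoeff fp = 0 := by
    have := hfp 0
    simpa [hf0] using this
  have hsplit : fp = (p:ℕ) • f + h := by
    rw [hh, Nat.cast_smul_eq_nsmul]; ring
  have funcEq : expS fp = (expS f) ^ p * H := by
    rw [hsplit, expS_add (by simp [hf0]) hh0, expS_nsmul hf0]
  -- expand property of expS fp
  have hexp : ∀ n : ℕ, coeff n (expS fp)
      = if p ∣ n then coeff (n / p) (expS f) else 0 := by
    intro n
    have hk : ∀ k : ℕ, coeff n (fp ^ k)
        = if p ∣ n then coeff (n / p) (f ^ k) else 0 :=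
      fun k => isExpand_pow (show IsExpand f fp from hfp) k n
    rw [expS, coeff_mk]
    by_cases hd : p ∣ n
    · rw [if_pos hd, coeff_expS hf0 (Nat.div_le_self n p)]
      apply Finset.sum_congr rfl
      intro k _
      rw [hk k, if_pos hd]
    · rw [if_neg hd]
      apply Finset.sum_eq_zero
      intro k _
      rw [hk k, if_neg hd, mul_zero]
  -- main strong induction
  intro n
  induction n using Nat.strong_induction_on with
  | _ n IH =>
  rcases Nat.eq_zero_or_pos n with rfl | hn
  · rw [coeff_zero_expS]; norm_num
  -- lift lower coefficients to ℤ_p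
  set b : ℕ → ℤ_[p] := fun m =>
    if hm : ‖coeff m (expS f)‖ ≤ 1 then ⟨_, hm⟩ else 0 with hbdef
  have hb : ∀ m, m < n → ((b m : ℚ_[p])) = coeff m (expS f) := by
    intro m hm
    rw [hbdef]
    simp only
    have e := dif_pos (IH m hm) (h := inferInstance) (α := ℤ_[p]) (t := fun hm => (⟨coeff m (expS f), hm⟩ : ℤ_[p]))
      (e := fun _ => (0 : ℤ_[p]))
    exact (congrArg (fun x : ℤ_[p] => (x : ℚ_[p])) e).trans rfl
  set Q : Polynomial ℤ_[p] := ∑ m ∈ Finset.range n, Polynomial.monomial m (b m) with hQdef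
  have hQcoeff : ∀ j, Q.coeff j = if j < n then b j else 0 := by
    intro j
    rw [hQdef, Polynomial.finset_sum_coeff]
    simp only [Polynomial.coeff_monomial]
    rw [Finset.sum_ite_eq' (Finset.range n) j b]
    simp [Finset.mem_range]
  set ι : ℤ_[p] →+* ℚ_[p] := PadicInt.Coe.ringHom with hι
  set T : PowerSeries ℚ_[p] := PowerSeries.map ι ((Q : PowerSeries ℤ_[p])) with hTdef
  have hTcoeff : ∀ j, coeff j T = ((Q.coeff j : ℤ_[p]) : ℚ_[p]) := by
    intro j
    rw [hTdef, PowerSeries.coeff_map, Polynomial.coeff_coe]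
    rfl
  have hTlow : ∀ m, m < n → coeff m T = coeff m (expS f) := by
    intro m hm
    rw [hTcoeff, hQcoeff, if_pos hm, hb m hm]
  have hTn : coeff n T = 0 := by
    rw [hTcoeff, hQcoeff, if_neg (lt_irrefl n)]
    simp
  have hTpow : ∀ (k j : ℕ), coeff j (T ^ k) = (((Q ^ k).coeff j : ℤ_[p]) : ℚ_[p]) := by
    intro k j
    rw [hTdef, ← map_pow, ← Polynomial.coe_pow, PowerSeries.coeff_map, Polynomial.coeff_coe]
    rfl
  set R : PowerSeries ℚ_[p] := expS f - T with hRdef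
  have hRdvd : (X : PowerSeries ℚ_[p]) ^ n ∣ R := by
    rw [X_pow_dvd_iff]
    intro m hm
    rw [hRdef, map_sub, hTlow m hm, sub_self]
  have c1 : ∀ m, m < n → coeff m ((expS f) ^ p) = coeff m (T ^ p) := by
    intro m hm
    have hdvd : (X : PowerSeries ℚ_[p]) ^ n ∣ ((expS f) ^ p - T ^ p) :=
      dvd_trans hRdvd (sub_dvd_pow_sub_pow _ _ p)
    have := (X_pow_dvd_iff.1 hdvd) m hm
    rw [map_sub, sub_eq_zero] at this
    exact this
  have hRlow : ∀ v, v < n → coeff v R = 0 := fun v hv => (X_pow_dvd_iff.1 hRdvd) v hv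
  have hRn : coeff n R = coeff n (expS f) := by
    rw [hRdef, map_sub, hTn, sub_zero]
  have c2 : coeff n ((expS f) ^ p)
      = coeff n (T ^ p) + (p : ℚ_[p]) * coeff n (expS f) := by
    have hEq : expS f = T + R := by rw [hRdef]; ring
    rw [hEq, add_pow, map_sum]
    have hp2 : p + 1 = (p - 1) + 1 + 1 := by omega
    have hi1 : p - 1 + 1 = p := by omega
    rw [hp2, Finset.sum_range_succ, Finset.sum_range_succ, hi1]
    have hzero : ∀ i ∈ Finset.range (p - 1),
        coeff n (T ^ i * R ^ (p - i) * (p.choose i : PowerSeries ℚ_[p])) = 0 := by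
      intro i hi
      rw [Finset.mem_range] at hi
      have hcast : (↑(p.choose i) : PowerSeries ℚ_[p])
          = PowerSeries.C ((p.choose i : ℚ_[p])) :=
        (map_natCast (PowerSeries.C) (p.choose i)).symm
      rw [hcast, PowerSeries.coeff_mul_C, coeff_mul]
      rw [Finset.sum_eq_zero, zero_mul]
      rintro ⟨u, v⟩ huv
      rw [Finset.HasAntidiagonal.mem_antidiagonal] at huv
      have hRe : coeff v (R ^ (p - i)) = 0 := by
        have hdvd2 : (X : PowerSeries ℚ_[p]) ^ (n * (p - i)) ∣ R ^ (p - i) := by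
          rw [pow_mul]
          exact pow_dvd_pow_of_dvd hRdvd _
        apply (X_pow_dvd_iff.1 hdvd2) v
        have : 2 ≤ p - i := by omega
        calc v ≤ n := by omega
          _ < n * (p - i) := by nlinarith
      rw [hRe, mul_zero]
    rw [Finset.sum_eq_zero hzero, zero_add]
    have hterm1 : coeff n (T ^ (p-1) * R ^ (p - (p-1)) * (p.choose (p-1) : PowerSeries ℚ_[p]))
        = (p : ℚ_[p]) * coeff n (expS f) := by
      have hpe : p - (p - 1) = 1 := by omega
      have hch : p.choose (p - 1) = p := by
        have := Nat.choose_symm (show 1 ≤ p by omega)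
        simp only [Nat.choose_one_right] at this
        exact this
      rw [hpe, pow_one]
      have hcast : (↑(p.choose (p-1)) : PowerSeries ℚ_[p])
          = PowerSeries.C ((p.choose (p-1) : ℚ_[p])) :=
        (map_natCast (PowerSeries.C) _).symm
      rw [hcast, PowerSeries.coeff_mul_C, coeff_mul]
      rw [Finset.sum_eq_single (0, n)]
      · have hT0 : coeff 0 (T ^ (p-1)) = 1 := by
          have hc0 : constantCoeff T = 1 := by
            have := hTlow 0 hn
            rw [coeff_zero_expS] at this
            rw [← coeff_zero_eq_constantCoeff_apply, this]
          rw [coeff_zero_eq_constantCoeff_apply, map_pow, hc0, one_pow]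
        rw [hT0, one_mul, hRn, hch]
        push_cast
        ring
      · rintro ⟨u, v⟩ huv hne
        rw [Finset.HasAntidiagonal.mem_antidiagonal] at huv
        have hv : v < n := by
          by_contra hcon
          push_neg at hcon
          apply hne
          have hv' : v = n := by omega
          have hu : u = 0 := by omega
          rw [hu, hv']
        rw [hRlow v hv, mul_zero]
      · intro hmem
        exact absurd (Finset.HasAntidiagonal.mem_antidiagonal.2 (by simp)) hmem
    rw [hterm1]
    have hpe2 : p - p = 0 := by omega
    have : coeff n (T ^ p * R ^ (p - p) * (p.choose p : PowerSeries ℚ_[p]))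
        = coeff n (T ^ p) := by
      rw [hpe2, pow_zero, mul_one, Nat.choose_self]
      simp
    rw [this, ← hEq]
    ring
  -- Frobenius congruence
  have hdivlt : n / p < n := Nat.div_lt_self hn hp1
  set D : ℤ_[p] := if p ∣ n then Q.coeff (n / p) else 0 with hDdef
  have hDcast : ((D : ℤ_[p]) : ℚ_[p])
      = (if p ∣ n then coeff (n / p) (expS f) else 0) := by
    rw [hDdef]
    by_cases hd : p ∣ n
    · rw [if_pos hd, if_pos hd, hQcoeff, if_pos hdivlt, hb _ hdivlt]
    · rw [if_neg hd, if_neg hd]; simp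
  have hfr : ∀ g : Polynomial (ZMod p), g.map (frobenius (ZMod p) p) = g := by
    intro g
    ext j
    rw [Polynomial.coeff_map, frobenius_def]
    exact ZMod.pow_card _
  have hchar : (Q.map (PadicInt.toZMod : ℤ_[p] →+* ZMod p)) ^ p
      = Polynomial.expand (ZMod p) p (Q.map PadicInt.toZMod) := by
    rw [← Polynomial.map_frobenius_expand p (Q.map (PadicInt.toZMod : ℤ_[p] →+* ZMod p)), hfr]
  have hfrob : PadicInt.toZMod ((Q ^ p).coeff n - D) = 0 := by
    rw [map_sub]
    have h1 : PadicInt.toZMod ((Q ^ p).coeff n)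
        = ((Q.map (PadicInt.toZMod : ℤ_[p] →+* ZMod p)) ^ p).coeff n := by
      rw [← Polynomial.map_pow, Polynomial.coeff_map]
    rw [h1, hchar, Polynomial.coeff_expand (show 0 < p by omega), hDdef]
    by_cases hd : p ∣ n
    · rw [if_pos hd, if_pos hd, Polynomial.coeff_map, sub_self]
    · rw [if_neg hd, if_neg hd, map_zero, sub_self]
  have c3 : ‖(if p ∣ n then coeff (n / p) (expS f) else 0) - coeff n (T ^ p)‖
      ≤ ‖(p : ℚ_[p])‖ := by
    rw [hTpow p n, ← hDcast]
    have hcc : ((D : ℚ_[p])) - (((Q ^ p).coeff n : ℤ_[p]) : ℚ_[p])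
        = (((D - (Q ^ p).coeff n : ℤ_[p]) : ℚ_[p])) := by push_cast [sub_eq_add_neg]; ring
    rw [hcc, ← PadicInt.norm_def]
    have hmem : (D - (Q ^ p).coeff n) ∈ Ideal.span {(p : ℤ_[p])} := by
      rw [← PadicInt.maximalIdeal_eq_span_p, ← PadicInt.ker_toZMod, RingHom.mem_ker, map_sub]
      rw [map_sub, sub_eq_zero] at hfrob
      rw [sub_eq_zero]
      exact hfrob.symm
    have hle := (PadicInt.norm_le_pow_iff_mem_span_pow (D - (Q ^ p).coeff n) 1).2
      (by rwa [pow_one])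
    rw [Padic.norm_p]
    calc ‖D - (Q ^ p).coeff n‖ ≤ (p : ℝ) ^ (-(1 : ℕ) : ℤ) := hle
      _ = (p : ℝ)⁻¹ := by norm_num
  have c4 : ∀ m, m < n → ‖coeff m ((expS f) ^ p)‖ ≤ 1 := by
    intro m hm
    rw [c1 m hm, hTpow, ← PadicInt.norm_def]
    exact PadicInt.norm_le_one _
  have hfun : (if p ∣ n then coeff (n / p) (expS f) else 0)
      = ∑ ij ∈ Finset.HasAntidiagonal.antidiagonal n,
          coeff ij.1 ((expS f) ^ p) * coeff ij.2 H := by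
    rw [← hexp n, funcEq, coeff_mul]
  have hmem2 : ((n, 0) : ℕ × ℕ) ∈ Finset.HasAntidiagonal.antidiagonal n := by
    rw [Finset.HasAntidiagonal.mem_antidiagonal]
    exact add_zero n
  have hsum : ∑ ij ∈ Finset.HasAntidiagonal.antidiagonal n,
        coeff ij.1 ((expS f) ^ p) * coeff ij.2 H
      = coeff n ((expS f) ^ p) + ∑ ij ∈ (Finset.HasAntidiagonal.antidiagonal n).erase (n, 0),
          coeff ij.1 ((expS f) ^ p) * coeff ij.2 H := by
    rw [← Finset.add_sum_erase _ _ hmem2, hH0, mul_one]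
  set S := ∑ ij ∈ (Finset.HasAntidiagonal.antidiagonal n).erase (n, 0),
      coeff ij.1 ((expS f) ^ p) * coeff ij.2 H with hSdef
  have hSb : ‖S‖ ≤ ‖(p : ℚ_[p])‖ := by
    rw [hSdef]
    apply IsUltrametricDist.norm_sum_le_of_forall_le_of_nonneg hppos.le
    rintro ⟨i, j⟩ hij
    rw [Finset.mem_erase, Finset.HasAntidiagonal.mem_antidiagonal] at hij
    have hj : 1 ≤ j := by
      rcases Nat.eq_zero_or_pos j with rfl | hjj
      · exfalso
        apply hij.1
        have : i = n := by omega
        rw [this]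
      · exact hjj
    have hi : i < n := by omega
    rw [norm_mul]
    calc ‖coeff i ((expS f) ^ p)‖ * ‖coeff j H‖
        ≤ 1 * ‖(p : ℚ_[p])‖ :=
          mul_le_mul (c4 i hi) (hHb j hj) (norm_nonneg _) zero_le_one
      _ = ‖(p : ℚ_[p])‖ := one_mul _
  have hkey : (p : ℚ_[p]) * coeff n (expS f)
      = ((if p ∣ n then coeff (n / p) (expS f) else 0) - coeff n (T ^ p))
        + (-S) := by
    have hcomb := hfun.trans hsum
    rw [c2] at hcomb
    linear_combination -hcomb
  have hnorm : ‖(p : ℚ_[p]) * coeff n (expS f)‖ ≤ ‖(p : ℚ_[p])‖ := by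
    rw [hkey]
    refine le_trans (Padic.nonarchimedean _ _) (max_le c3 ?_)
    rw [norm_neg]
    exact hSb
  rw [norm_mul] at hnorm
  exact (mul_le_iff_le_one_right hppos).1 hnorm

end DworkAux

/-- If `f ∈ z·ℚ_p[[z]]` satisfies `f(z^p) - p·f(z) ∈ p·z·ℤ_p[[z]]`, then
`exp(f)` has `p`-integral coefficients. Here `fp` denotes `f(z^p)` and `E` denotes
the formal exponential `exp(f) = Σ_k f^k / k!`. -/
theorem exp_integral_of_dwork_congruence (p : ℕ) [Fact p.Prime]
    (f : PowerSeries ℚ_[p]) (hf0 : PowerSeries.constantCoeff f = 0)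
    (fp : PowerSeries ℚ_[p])
    (hfp : ∀ n : ℕ, PowerSeries.coeff n fp =
      if p ∣ n then PowerSeries.coeff (n / p) f else 0)
    (hcong : PowerSeries.constantCoeff (fp - (p : ℚ_[p]) • f) = 0 ∧
      ∀ n : ℕ, ‖PowerSeries.coeff n (fp - (p : ℚ_[p]) • f)‖ ≤ ‖(p : ℚ_[p])‖)
    (E : PowerSeries ℚ_[p])
    (hE : ∀ n : ℕ, PowerSeries.coeff n E =
      ∑ k ∈ Finset.range (n + 1),
        ((k.factorial : ℚ_[p]))⁻¹ * PowerSeries.coeff n (f ^ k)) :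
    ∀ n : ℕ, ‖PowerSeries.coeff n E‖ ≤ 1 := by
  have hEeq : E = DworkAux.expS f := by
    ext n
    rw [hE n, DworkAux.expS, coeff_mk]
  rw [hEeq]
  exact DworkAux.main f hf0 fp hfp hcong
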